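/- Let d ≥ 1 be an integer, n ≥ 1, x_1, …, x_n ∈ ℝ^d, and let μ be a positive Borel measure on ℝ^d of total mass n with density with respect to Lebesgue measure bounded above by A > 0. Then W_1( Σ_{i=1}^n δ_{x_i}, μ ) ≥ n · (d/(A·σ_{d−1}))^{1/d} · d/(d+1), where σ_{d−1} = d·ω_d is the (d−1)-dimensional surface measure of the unit sphere in ℝ^d and ω_d is the Lebesgue measure of the unit ball. -/

import Mathlib

open MeasureTheory ENNReal

noncomputable section

/-- The `1`-Wasserstein distance between two positive Borel measures on `ℝ^d`:
infimum over couplings of the integral of the distance. -/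
def W1 {d : ℕ} (μ ν : Measure (EuclideanSpace ℝ (Fin d))) : ℝ≥0∞ :=
  ⨅ π ∈ {π : Measure (EuclideanSpace ℝ (Fin d) × EuclideanSpace ℝ (Fin d)) |
      π.map Prod.fst = μ ∧ π.map Prod.snd = ν},
    ∫⁻ z, edist z.1 z.2 ∂π

/-- Lemma (explicit `W₁` lower bound): for `d ≥ 1`, `n ≥ 1`, points `x_1, …, x_n ∈ ℝ^d`
and a measure `μ` of total mass `n` with density bounded above by `A > 0`,
`W_1(Σ δ_{x_i}, μ) ≥ n (d/(A σ_{d-1}))^{1/d} d/(d+1)`, where `σ_{d-1} = d ω_d` and `ω_d`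
is the Lebesgue measure of the unit ball in `ℝ^d`. -/
theorem W1_lower_bound (d : ℕ) (hd : 1 ≤ d) (n : ℕ) (hn : 1 ≤ n)
    (x : Fin n → EuclideanSpace ℝ (Fin d))
    (μ : Measure (EuclideanSpace ℝ (Fin d)))
    (hmass : μ Set.univ = (n : ℝ≥0∞))
    (A : ℝ) (hA : 0 < A)
    -- μ has density with respect to Lebesgue measure bounded above by A
    (hdens : ∀ s : Set (EuclideanSpace ℝ (Fin d)), MeasurableSet s →
      μ s ≤ ENNReal.ofReal A * volume s) :
    ENNReal.ofReal (n *
        (d / (A * (d * (volume (Metric.ball (0 : EuclideanSpace ℝ (Fin d)) 1)).toReal)))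
          ^ ((1 : ℝ) / d) * (d / (d + 1)))
      ≤ W1 (∑ i : Fin n, Measure.dirac (x i)) μ := by
  classical
  have hd0 : (0:ℝ) < d := by exact_mod_cast hd
  set ω : ℝ := (volume (Metric.ball (0 : EuclideanSpace ℝ (Fin d)) 1)).toReal with hω
  have hωpos : 0 < ω :=
    ENNReal.toReal_pos (Metric.measure_ball_pos volume _ one_pos).ne' measure_ball_lt_top.ne
  set R : ℝ := (↑d / (A * (↑d * ω))) ^ ((1:ℝ)/d) with hRdef
  have hbase : (d:ℝ) / (A * (d * ω)) = 1 / (A * ω) := by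
    rw [div_eq_div_iff (by positivity) (by positivity)]
    ring
  have hbasepos : (0:ℝ) < (d:ℝ) / (A * (d * ω)) := by rw [hbase]; positivity
  have hRpos : 0 < R := Real.rpow_pos_of_pos hbasepos _
  have hRd : A * ω * R ^ d = 1 := by
    have h1 : R ^ d = ((1:ℝ) / (A*ω)) ^ (((1:ℝ)/d) * d) := by
      rw [hRdef, hbase, ← Real.rpow_natCast (_ ^ ((1:ℝ)/d)) d,
        ← Real.rpow_mul (by positivity)]
    have h2 : ((1:ℝ)/d) * d = 1 := by field_simp
    rw [h1, h2, Real.rpow_one]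
    field_simp
  set g : EuclideanSpace ℝ (Fin d) → ℝ := fun y => Metric.infDist y (Set.range x) with hg
  have hg_cont : Continuous g := Metric.continuous_infDist_pt _
  have hg_meas : Measurable g := hg_cont.measurable
  have hrange_ne : (Set.range x).Nonempty := ⟨x ⟨0, hn⟩, Set.mem_range_self _⟩
  have hrange_fin : (Set.range x).Finite := Set.finite_range x
  have hvol : volume (Metric.ball (0 : EuclideanSpace ℝ (Fin d)) 1) = ENNReal.ofReal ω := by
    rw [hω, ENNReal.ofReal_toReal measure_ball_lt_top.ne]
  -- measure of sublevel sets
  have hball : ∀ t : ℝ, 0 ≤ t →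
      μ {y | g y ≤ t} ≤ ENNReal.ofReal (↑n * (A * ω * t ^ d)) := by
    intro t ht
    have hsub : {y | g y ≤ t} ⊆ ⋃ i : Fin n, Metric.closedBall (x i) t := by
      intro y hy
      obtain ⟨z, hz, hzd⟩ := hrange_fin.isCompact.exists_infDist_eq_dist hrange_ne y
      obtain ⟨i, rfl⟩ := hz
      exact Set.mem_iUnion.2 ⟨i, Metric.mem_closedBall.2 (by rw [← hzd]; exact hy)⟩
    have hcb : ∀ i : Fin n, volume (Metric.closedBall (x i) t)
        = ENNReal.ofReal (t ^ d) * volume (Metric.ball (0 : EuclideanSpace ℝ (Fin d)) 1) := by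
      intro i
      rw [Measure.addHaar_closedBall volume (x i) ht, finrank_euclideanSpace_fin]
    calc μ {y | g y ≤ t} ≤ ∑ i : Fin n, μ (Metric.closedBall (x i) t) :=
          (measure_mono hsub).trans (measure_iUnion_fintype_le _ _)
      _ ≤ ∑ _i : Fin n, ENNReal.ofReal A * (ENNReal.ofReal (t ^ d) * ENNReal.ofReal ω) := by
          refine Finset.sum_le_sum fun i _ => ?_
          have h := hdens (Metric.closedBall (x i) t) Metric.isClosed_closedBall.measurableSet
          rwa [hcb i, hvol] at h
      _ = ENNReal.ofReal (↑n * (A * ω * t ^ d)) := by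
          rw [Finset.sum_const, Finset.card_univ, Fintype.card_fin, nsmul_eq_mul,
            ← ENNReal.ofReal_mul (by positivity : (0:ℝ) ≤ t ^ d),
            ← ENNReal.ofReal_mul hA.le, ← ENNReal.ofReal_natCast n,
            ← ENNReal.ofReal_mul (Nat.cast_nonneg n)]
          congr 1
          ring
  -- measure of superlevel sets
  have hcompl : ∀ t : ℝ, 0 ≤ t →
      ENNReal.ofReal (↑n * (1 - A * ω * t ^ d)) ≤ μ {y | t < g y} := by
    intro t ht
    have hms : MeasurableSet {y | g y ≤ t} := hg_meas measurableSet_Iic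
    have hset : {y | t < g y} = {y | g y ≤ t}ᶜ := by ext y; simp [not_le]
    have hfin : μ {y | g y ≤ t} ≠ ⊤ := by
      refine ne_top_of_le_ne_top ?_ (measure_mono (Set.subset_univ _))
      rw [hmass]; exact natCast_ne_top n
    rw [hset, measure_compl hms hfin, hmass]
    have key : ENNReal.ofReal (↑n * (1 - A * ω * t ^ d))
        ≤ (n : ℝ≥0∞) - ENNReal.ofReal (↑n * (A * ω * t ^ d)) := by
      rw [← ENNReal.ofReal_natCast n, ← ENNReal.ofReal_sub _ (by positivity)]
      apply ENNReal.ofReal_le_ofReal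
      nlinarith [sq_nonneg (A * ω * t ^ d)]
    exact key.trans (tsub_le_tsub_left (hball t ht) _)
  rw [W1]
  refine le_iInf₂ fun π hπ => ?_
  obtain ⟨hfst, hsnd⟩ := hπ
  have hae : ∀ᵐ z ∂π, z.1 ∈ Set.range x := by
    have hm : MeasurableSet (Set.range x) := hrange_fin.measurableSet
    rw [ae_iff]
    have hpre : {z : EuclideanSpace ℝ (Fin d) × EuclideanSpace ℝ (Fin d) | ¬ z.1 ∈ Set.range x}
        = Prod.fst ⁻¹' (Set.range x)ᶜ := rfl
    rw [hpre, ← Measure.map_apply measurable_fst hm.compl, hfst,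
      Measure.finset_sum_apply]
    refine Finset.sum_eq_zero fun i _ => ?_
    rw [Measure.dirac_apply' _ hm.compl]
    simp [Set.mem_range_self]
  have step1 : ∫⁻ z, ENNReal.ofReal (g z.2) ∂π ≤ ∫⁻ z, edist z.1 z.2 ∂π := by
    refine lintegral_mono_ae (hae.mono fun z hz => ?_)
    rw [edist_dist]
    apply ENNReal.ofReal_le_ofReal
    calc g z.2 ≤ dist z.2 z.1 := Metric.infDist_le_dist_of_mem hz
      _ = dist z.1 z.2 := dist_comm _ _
  have step2 : ∫⁻ z, ENNReal.ofReal (g z.2) ∂π = ∫⁻ y, ENNReal.ofReal (g y) ∂μ := by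
    rw [← hsnd, lintegral_map hg_meas.ennreal_ofReal measurable_snd]
  have step3 : ∫⁻ y, ENNReal.ofReal (g y) ∂μ = ∫⁻ t in Set.Ioi 0, μ {y | t < g y} :=
    lintegral_eq_lintegral_meas_lt μ (ae_of_all _ fun y => Metric.infDist_nonneg)
      hg_meas.aemeasurable
  have step4 : ∫⁻ t in Set.Ioo 0 R, ENNReal.ofReal (↑n * (1 - A * ω * t ^ d))
      ≤ ∫⁻ t in Set.Ioi 0, μ {y | t < g y} := by
    calc ∫⁻ t in Set.Ioo 0 R, ENNReal.ofReal (↑n * (1 - A * ω * t ^ d))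
        ≤ ∫⁻ t in Set.Ioo 0 R, μ {y | t < g y} := by
          refine lintegral_mono_ae ?_
          rw [ae_restrict_iff' measurableSet_Ioo]
          exact ae_of_all _ fun t ht => hcompl t ht.1.le
      _ ≤ ∫⁻ t in Set.Ioi 0, μ {y | t < g y} :=
          lintegral_mono' (Measure.restrict_mono Set.Ioo_subset_Ioi_self le_rfl) le_rfl
  have hnonneg : ∀ t ∈ Set.Ioo (0:ℝ) R, 0 ≤ ↑n * (1 - A * ω * t ^ d) := by
    intro t ht
    have htd : t ^ d ≤ R ^ d := pow_le_pow_left₀ ht.1.le ht.2.le d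
    have h1 : A * ω * t ^ d ≤ 1 := by
      calc A * ω * t ^ d ≤ A * ω * R ^ d := by
            exact mul_le_mul_of_nonneg_left htd (by positivity)
        _ = 1 := hRd
    have hn0 : (0:ℝ) ≤ n := Nat.cast_nonneg n
    nlinarith
  have hcontint : Continuous fun t : ℝ => ↑n * (1 - A * ω * t ^ d) :=
    continuous_const.mul (continuous_const.sub (continuous_const.mul (continuous_pow d)))
  have hint : IntegrableOn (fun t : ℝ => ↑n * (1 - A * ω * t ^ d)) (Set.Ioo 0 R) volume :=
    (hcontint.integrableOn_Icc).mono_set Set.Ioo_subset_Icc_self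
  have step5 : ∫⁻ t in Set.Ioo 0 R, ENNReal.ofReal (↑n * (1 - A * ω * t ^ d))
      = ENNReal.ofReal (∫ t in Set.Ioo 0 R, ↑n * (1 - A * ω * t ^ d)) := by
    rw [ofReal_integral_eq_lintegral_ofReal hint
      ((ae_restrict_iff' measurableSet_Ioo).2 (ae_of_all _ hnonneg))]
  have hR1 : A * ω * R ^ (d+1) = R := by rw [pow_succ, ← mul_assoc, hRd, one_mul]
  have hval : ∫ t in Set.Ioo 0 R, ↑n * (1 - A * ω * t ^ d) = ↑n * R * (↑d / (↑d + 1)) := by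
    rw [← integral_Ioc_eq_integral_Ioo, ← intervalIntegral.integral_of_le hRpos.le]
    have h1 : ∀ t : ℝ, ↑n * (1 - A * ω * t ^ d) = ↑n - (↑n * (A * ω)) * t ^ d := fun t => by ring
    simp_rw [h1]
    rw [intervalIntegral.integral_sub intervalIntegrable_const
        ((intervalIntegral.intervalIntegrable_pow d).const_mul _),
      intervalIntegral.integral_const, intervalIntegral.integral_const_mul, integral_pow]
    rw [smul_eq_mul, zero_pow (Nat.succ_ne_zero d)]
    have hd1 : (d:ℝ) + 1 ≠ 0 := by positivity
    field_simp
    linear_combination (-R) * hRd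
  have hvalue : (↑n * (↑d / (A * (↑d * ω))) ^ ((1:ℝ)/d) * (↑d / (↑d + 1)) : ℝ)
      = ↑n * R * (↑d / (↑d + 1)) := by rw [← hRdef]
  calc ENNReal.ofReal (↑n * (↑d / (A * (↑d * ω))) ^ ((1:ℝ)/d) * (↑d / (↑d + 1)))
      = ∫⁻ t in Set.Ioo 0 R, ENNReal.ofReal (↑n * (1 - A * ω * t ^ d)) := by
        rw [step5, hval, hvalue]
    _ ≤ ∫⁻ t in Set.Ioi 0, μ {y | t < g y} := step4
    _ = ∫⁻ z, ENNReal.ofReal (g z.2) ∂π := by rw [step2, step3]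
    _ ≤ ∫⁻ z, edist z.1 z.2 ∂π := step1
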